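/- For the mean-field Glauber magnetization generator drift 𝓕_N(m,h) = (2/N)(c⁺(m,h) − c⁻(m,h)), where c^±(m,h) = (N/2)(1∓m)·e^{±β[h+(m±1/N)]}/(e^{−β[h+(m±1/N)]} + e^{β[h+(m±1/N)]}), there exists c > 0 such that |𝓕_N(m,h) − F(m,h)| ≤ c/N uniformly in m ∈ [−1,1] and |h| ≤ h_c, for all N large enough, where F(m,h) = −m + tanh(β(m+h)). -/

import Mathlib

lemma tanh_hasDerivAt (x : ℝ) :
    HasDerivAt Real.tanh (1 / Real.cosh x ^ 2) x := by
  have h := (Real.hasDerivAt_sinh x).div (Real.hasDerivAt_cosh x) (Real.cosh_pos x).ne'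
  have : (Real.cosh x * Real.cosh x - Real.sinh x * Real.sinh x) / Real.cosh x ^ 2
      = 1 / Real.cosh x ^ 2 := by
    rw [show Real.cosh x * Real.cosh x - Real.sinh x * Real.sinh x
        = Real.cosh x ^ 2 - Real.sinh x ^ 2 by ring, Real.cosh_sq_sub_sinh_sq]
  rw [this] at h
  have heq : (fun y => Real.sinh y / Real.cosh y) = Real.tanh := by
    funext y; rw [Real.tanh_eq_sinh_div_cosh]
  have h' : HasDerivAt (fun y => Real.sinh y / Real.cosh y) (1 / Real.cosh x ^ 2) x := h
  rwa [heq] at h'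

lemma tanh_lipschitz (a b : ℝ) : |Real.tanh a - Real.tanh b| ≤ |a - b| := by
  have hlip : LipschitzWith 1 Real.tanh := by
    apply lipschitzWith_of_nnnorm_deriv_le (fun x => (tanh_hasDerivAt x).differentiableAt)
    intro x
    rw [(tanh_hasDerivAt x).deriv]
    have h1 : (1 : ℝ) ≤ Real.cosh x ^ 2 := by
      have := Real.one_le_cosh x; nlinarith
    have : ‖(1 : ℝ) / Real.cosh x ^ 2‖ ≤ 1 := by
      rw [Real.norm_eq_abs, abs_div, abs_one, abs_of_pos (by positivity : (0:ℝ) < Real.cosh x ^ 2)]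
      rw [div_le_one (by positivity)]; exact h1
    exact_mod_cast this
  have := hlip.dist_le_mul a b
  simpa [Real.dist_eq] using this

lemma exp_frac_plus (x : ℝ) :
    Real.exp x / (Real.exp (-x) + Real.exp x) = (1 + Real.tanh x) / 2 := by
  have hd : (0:ℝ) < Real.exp (-x) + Real.exp x := by positivity
  rw [Real.tanh_eq_sinh_div_cosh, Real.sinh_eq, Real.cosh_eq]
  have hc : (0:ℝ) < (Real.exp x + Real.exp (-x)) / 2 := by positivity
  field_simp
  ring

lemma exp_frac_minus (x : ℝ) :
    Real.exp (-x) / (Real.exp (-x) + Real.exp x) = (1 - Real.tanh x) / 2 := by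
  have hd : (0:ℝ) < Real.exp (-x) + Real.exp x := by positivity
  rw [Real.tanh_eq_sinh_div_cosh, Real.sinh_eq, Real.cosh_eq]
  have hc : (0:ℝ) < (Real.exp x + Real.exp (-x)) / 2 := by positivity
  field_simp
  ring

/-- The microscopic Glauber drift `𝓕_N(m,h) = (2/N)(c⁺ − c⁻)` is uniformly `c/N`-close to the
macroscopic drift `F(m,h) = −m + tanh(β(m+h))` on `[-1,1] × [-h_c,h_c]`. -/
theorem stmt_11 (β h_c : ℝ) (hβ : 0 < β) (hhc : 0 < h_c) :
    ∃ c > 0, ∃ N₀ : ℕ, ∀ N : ℕ, N₀ ≤ N →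
      ∀ m ∈ Set.Icc (-1 : ℝ) 1, ∀ h : ℝ, |h| ≤ h_c →
        |(2 / (N : ℝ)) *
            (((N : ℝ) / 2 * (1 - m) *
                (Real.exp (β * (h + (m + 1 / N))) /
                  (Real.exp (-(β * (h + (m + 1 / N)))) + Real.exp (β * (h + (m + 1 / N)))))) -
              ((N : ℝ) / 2 * (1 + m) *
                (Real.exp (-(β * (h + (m - 1 / N)))) /
                  (Real.exp (-(β * (h + (m - 1 / N)))) + Real.exp (β * (h + (m - 1 / N)))))))
          - (-m + Real.tanh (β * (m + h)))| ≤ c / N := by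
  refine ⟨β, hβ, 1, fun N hN m hm h _ => ?_⟩
  have hNpos : (0:ℝ) < N := by exact_mod_cast hN
  have hNne : (N:ℝ) ≠ 0 := hNpos.ne'
  obtain ⟨hm1, hm2⟩ := hm
  set xp : ℝ := β * (h + (m + 1 / N)) with hxp
  set xq : ℝ := β * (h + (m - 1 / N)) with hxq
  set t : ℝ := β * (m + h) with ht
  have key : (2 / (N : ℝ)) *
        (((N : ℝ) / 2 * (1 - m) *
            (Real.exp xp / (Real.exp (-xp) + Real.exp xp))) -
          ((N : ℝ) / 2 * (1 + m) *
            (Real.exp (-xq) / (Real.exp (-xq) + Real.exp xq))))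
      = (1 - m) * ((1 + Real.tanh xp) / 2) - (1 + m) * ((1 - Real.tanh xq) / 2) := by
    rw [exp_frac_plus, exp_frac_minus]
    field_simp
  rw [key]
  have hdiff : (1 - m) * ((1 + Real.tanh xp) / 2) - (1 + m) * ((1 - Real.tanh xq) / 2)
      - (-m + Real.tanh t)
      = (1 - m) / 2 * (Real.tanh xp - Real.tanh t)
        + (1 + m) / 2 * (Real.tanh xq - Real.tanh t) := by ring
  rw [hdiff]
  have hbp : |Real.tanh xp - Real.tanh t| ≤ β / N := by
    have := tanh_lipschitz xp t
    have hx : xp - t = β / N := by rw [hxp, ht]; field_simp; ring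
    rw [hx] at this
    calc |Real.tanh xp - Real.tanh t| ≤ |β / N| := this
      _ = β / N := abs_of_pos (by positivity)
  have hbq : |Real.tanh xq - Real.tanh t| ≤ β / N := by
    have := tanh_lipschitz xq t
    have hx : xq - t = -(β / N) := by rw [hxq, ht]; field_simp; ring
    rw [hx, abs_neg] at this
    calc |Real.tanh xq - Real.tanh t| ≤ |β / N| := this
      _ = β / N := abs_of_pos (by positivity)
  have h1 : (0:ℝ) ≤ (1 - m) / 2 := by linarith
  have h2 : (0:ℝ) ≤ (1 + m) / 2 := by linarith
  calc |(1 - m) / 2 * (Real.tanh xp - Real.tanh t)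
        + (1 + m) / 2 * (Real.tanh xq - Real.tanh t)|
      ≤ |(1 - m) / 2 * (Real.tanh xp - Real.tanh t)|
        + |(1 + m) / 2 * (Real.tanh xq - Real.tanh t)| := abs_add_le _ _
    _ = (1 - m) / 2 * |Real.tanh xp - Real.tanh t|
        + (1 + m) / 2 * |Real.tanh xq - Real.tanh t| := by
        rw [abs_mul, abs_mul, abs_of_nonneg h1, abs_of_nonneg h2]
    _ ≤ (1 - m) / 2 * (β / N) + (1 + m) / 2 * (β / N) := by
        gcongr
    _ = β / N := by ring
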